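/- Let p ≥ 1 and β ≥ 2 be integers, set r_i = β^i for 0 ≤ i ≤ p+1, and let α = β^{p+1}. Then the edge-coloring c_p of the complete graph on the vertex set {0,1}^α (which has n = 2^{β^{p+1}} vertices) takes at most 2^{4(p+1)·β^p·log₂ β} distinct values on unordered pairs of distinct vertices; equivalently, c_p uses at most 2^{4·(log₂ n)^{1 − 1/(p+1)}·log₂ log₂ n} colors. -/

import Mathlib

/-!
Coloring machinery of Conlon–Fox–Lee–Sudakov. Vectors in `{0,1}^α` are modelled as
`Bool` lists of length `α`. Fix block lengths `r 0 = 1, r 1, …` with `r d ∣ r (d+1)`.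
-/

/-- The blocks of resolution with block length `r`: split a vector into consecutive
blocks of length `r` (the last block may be shorter). -/
def blocksOf (r : ℕ) (v : List Bool) : List (List Bool) := v.toChunks r

/-- The function `η_d` (with `r = r_d`): records the position `i` of the first pair of
differing blocks of resolution `d` together with the unordered pair `{v_i, w_i}` of
these blocks; it takes the value `none` (playing the role of `0`) when `v = w`. -/
def eta (r : ℕ) (v w : List Bool) : Option (ℕ × Sym2 (List Bool)) :=
  (((blocksOf r v).zip (blocksOf r w)).zipIdx.map Prod.swap |>.find? (fun q => q.2.1 != q.2.2)).map
    (fun q => (q.1, s(q.2.1, q.2.2)))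

/-- The function `ξ_d`: apply `η_d` to each corresponding pair of blocks of
resolution `d+1`. -/
def xi (r : ℕ → ℕ) (d : ℕ) (v w : List Bool) : List (Option (ℕ × Sym2 (List Bool))) :=
  ((blocksOf (r (d+1)) v).zip (blocksOf (r (d+1)) w)).map fun q => eta (r d) q.1 q.2

/-- The type of colors used by the coloring `c_p`. -/
abbrev EGColor := List (List (Option (ℕ × Sym2 (List Bool))))

instance : DecidableEq (List (Option (ℕ × Sym2 (List Bool)))) := instDecidableEqList
instance : DecidableEq EGColor := instDecidableEqList

/-- The coloring `c_p (v,w) = (ξ_p(v,w), ξ_{p-1}(v,w), …, ξ_0(v,w))`. -/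
def cColor (r : ℕ → ℕ) (p : ℕ) (v w : List Bool) : EGColor :=
  (List.range (p+1)).map fun j => xi r (p - j) v w

/-- The set of colors appearing under `c_p` on (unordered) pairs of distinct
elements of `S`. -/
def colorsOn (r : ℕ → ℕ) (p : ℕ) (S : Finset (List Bool)) : Finset EGColor :=
  ((S ×ˢ S).filter fun q => q.1 ≠ q.2).image fun q => cColor r p q.1 q.2

/-- The vertex set `{0,1}^α`, realized as the set of all `Bool` lists of length `α`. -/
def allVecs (α : ℕ) : Finset (List Bool) :=
  Finset.univ.image fun v : Fin α → Bool => List.ofFn v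

/-- `alphaD rd α`: the largest multiple of `rd` that is strictly less than `α`
(for `α, rd ≥ 1`). -/
def alphaD (rd α : ℕ) : ℕ := rd * ((α - 1) / rd)

/-- The set `C_E^{(d)}` of emerging colors of `S` at resolution `d`: the unordered pairs
`{v'', w''}` of final segments of elements `v = (v', v'')`, `w = (w', w'')` of `S`
(split at `α_d`) with `v' = w'` and `v'' ≠ w''`. -/
def CEset (r : ℕ → ℕ) (α : ℕ) (S : Finset (List Bool)) (d : ℕ) : Finset (Sym2 (List Bool)) :=
  ((S ×ˢ S).filter fun q =>
      q.1.take (alphaD (r d) α) = q.2.take (alphaD (r d) α) ∧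
      q.1.drop (alphaD (r d) α) ≠ q.2.drop (alphaD (r d) α)).image
    fun q => s(q.1.drop (alphaD (r d) α), q.2.drop (alphaD (r d) α))

/-- The set `C_I^{(d)}` of inherited colors of `S` at resolution `d`: the pairs
`(c_p(v', w'), η_{d-1}(v'', w''))` over elements `v = (v', v'')`, `w = (w', w'')` of `S`
(split at `α_d`) with `v' ≠ w'`. -/
def CIset (r : ℕ → ℕ) (p α : ℕ) (S : Finset (List Bool)) (d : ℕ) :
    Finset (EGColor × Option (ℕ × Sym2 (List Bool))) :=
  ((S ×ˢ S).filter fun q =>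
      q.1.take (alphaD (r d) α) ≠ q.2.take (alphaD (r d) α)).image
    fun q => (cColor r p (q.1.take (alphaD (r d) α)) (q.2.take (alphaD (r d) α)),
              eta (r (d-1)) (q.1.drop (alphaD (r d) α)) (q.2.drop (alphaD (r d) α)))

/-! ### Auxiliary lemmas -/

namespace EGAux

lemma toChunks_nil {α : Type*} (n : ℕ) : List.toChunks n ([] : List α) = [] := by
  cases n <;> rfl

lemma mkEmpty_push {α : Type*} (n : ℕ) (x : α) : (Array.mkEmpty n).push x = #[x] := rfl

lemma go_eq {α : Type*} (n : ℕ) : ∀ (xs : List α) (acc₁ : Array α) (acc₂ : Array (List α)),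
    0 < acc₁.size → acc₁.size ≤ n+1 →
    List.toChunks.go (n+1) xs acc₁ acc₂ =
      acc₂.toList ++ (acc₁.toList ++ xs).take (n+1) ::
        List.toChunks (n+1) ((acc₁.toList ++ xs).drop (n+1))
  | [], acc₁, acc₂, h1, h2 => by
    rw [List.toChunks.go.eq_def]
    have hl : acc₁.toList.length ≤ n + 1 := by simpa using h2
    simp [List.take_of_length_le hl, List.drop_of_length_le hl, toChunks_nil]
  | x :: xs, acc₁, acc₂, h1, h2 => by
    rw [List.toChunks.go.eq_def]
    simp only []
    split
    · next hsz =>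
      have hsz' : acc₁.size = n + 1 := by simpa using hsz
      rw [mkEmpty_push, go_eq n xs #[x] _ (by simp) (by simp)]
      have hlen : acc₁.toList.length = n + 1 := by simpa using hsz'
      rw [List.take_left' hlen, List.drop_left' hlen]
      have : List.toChunks (n+1) (x :: xs) = List.toChunks.go (n+1) xs #[x] #[] :=
        List.toChunks.eq_3 (n+1) x xs (by omega)
      rw [this, go_eq n xs #[x] #[] (by simp) (by simp)]
      simp
    · next hsz =>
      have hsz' : acc₁.size ≠ n + 1 := by simpa using hsz
      rw [go_eq n xs (acc₁.push x) acc₂ (by simp) (by simp; omega)]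
      simp

lemma toChunks_eq {α : Type*} (r : ℕ) (hr : 0 < r) (l : List α) (hl : l ≠ []) :
    l.toChunks r = l.take r :: (l.drop r).toChunks r := by
  obtain ⟨n, rfl⟩ : ∃ n, r = n + 1 := ⟨r - 1, by omega⟩
  obtain ⟨x, xs, rfl⟩ : ∃ x xs, l = x :: xs := by
    cases l with
    | nil => exact absurd rfl hl
    | cons a as => exact ⟨a, as, rfl⟩
  rw [List.toChunks.eq_3 (n+1) x xs (by omega), go_eq n xs #[x] #[] (by simp) (by simp)]
  simp

lemma toChunks_full {α : Type*} (r : ℕ) (hr : 0 < r) : ∀ (k : ℕ) (l : List α),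
    l.length = k * r →
    (l.toChunks r).length = k ∧ ∀ c ∈ l.toChunks r, c.length = r
  | 0, l, h => by
    have : l = [] := List.length_eq_zero_iff.1 (by omega)
    subst this
    simp [toChunks_nil]
  | k+1, l, h => by
    have hl : l ≠ [] := by
      intro h'; subst h'; simp at h; omega
    rw [toChunks_eq r hr l hl]
    rw [Nat.succ_mul] at h
    have hrle : r ≤ l.length := by omega
    have hdrop : (l.drop r).length = k * r := by simp; omega
    obtain ⟨h1, h2⟩ := toChunks_full r hr k (l.drop r) hdrop
    refine ⟨by simpa using h1, ?_⟩
    intro c hc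
    rcases List.mem_cons.1 hc with hc | hc
    · subst hc; simp [List.length_take]; omega
    · exact h2 c hc

lemma mem_allVecs {n : ℕ} {v : List Bool} : v ∈ allVecs n ↔ v.length = n := by
  constructor
  · rintro hv
    obtain ⟨f, -, rfl⟩ := Finset.mem_image.1 hv
    simp
  · intro h
    refine Finset.mem_image.2 ⟨fun i : Fin n => v.get (Fin.cast h.symm i), Finset.mem_univ _, ?_⟩
    apply List.ext_get (by simp [h])
    intro i h1 h2
    simp [List.get_ofFn]

lemma card_allVecs (n : ℕ) : (allVecs n).card = 2 ^ n := by
  rw [allVecs, Finset.card_image_of_injective _ List.ofFn_injective]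
  simp

def listsOf {γ : Type*} [DecidableEq γ] (s : Finset γ) : ℕ → Finset (List γ)
  | 0 => {[]}
  | n+1 => (s ×ˢ listsOf s n).image fun q => q.1 :: q.2

lemma card_listsOf {γ : Type*} [DecidableEq γ] (s : Finset γ) (n : ℕ) :
    (listsOf s n).card = s.card ^ n := by
  induction n with
  | zero => simp [listsOf]
  | succ n ih =>
    rw [listsOf, Finset.card_image_of_injective, Finset.card_product, ih, pow_succ]
    · ring
    · rintro ⟨a, as⟩ ⟨b, bs⟩ h
      simp_all

lemma map_mem_listsOf {γ δ : Type*} [DecidableEq γ] {s : Finset γ} {g : δ → γ} :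
    ∀ {l : List δ} {n : ℕ}, l.length = n → (∀ a ∈ l, g a ∈ s) → l.map g ∈ listsOf s n
  | [], 0, _, _ => by simp [listsOf]
  | x :: xs, n+1, h, hmem => by
    rw [listsOf, List.map_cons]
    exact Finset.mem_image.2 ⟨(g x, xs.map g),
      Finset.mem_product.2 ⟨hmem x (by simp), map_mem_listsOf (by simpa using h)
        (fun a ha => hmem a (by simp [ha]))⟩, rfl⟩

def prodLists {γ : Type*} [DecidableEq γ] : (ℕ → Finset γ) → ℕ → Finset (List γ)
  | _, 0 => {[]}
  | f, n+1 => (f 0 ×ˢ prodLists (fun i => f (i+1)) n).image fun q => q.1 :: q.2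

lemma card_prodLists {γ : Type*} [DecidableEq γ] : ∀ (n : ℕ) (f : ℕ → Finset γ),
    (prodLists f n).card = ∏ j ∈ Finset.range n, (f j).card
  | 0, f => by simp [prodLists]
  | n+1, f => by
    rw [prodLists, Finset.card_image_of_injective, Finset.card_product,
      card_prodLists n, Finset.prod_range_succ']
    · ring
    · rintro ⟨a, as⟩ ⟨b, bs⟩ h
      simp_all

lemma range_map_mem_prodLists {γ : Type*} [DecidableEq γ] :
    ∀ (n : ℕ) (f : ℕ → Finset γ) (g : ℕ → γ), (∀ j < n, g j ∈ f j) →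
      (List.range n).map g ∈ prodLists f n
  | 0, f, g, _ => by simp [prodLists]
  | n+1, f, g, h => by
    rw [List.range_succ_eq_map, List.map_cons, prodLists]
    refine Finset.mem_image.2 ⟨(g 0, (List.range n).map (fun i => g (i+1))),
      Finset.mem_product.2 ⟨h 0 (by omega), range_map_mem_prodLists n _ _
        (fun j hj => h (j+1) (by omega))⟩, ?_⟩
    simp [List.map_map, Function.comp_def]

/-- The possible values of `η` at block length `m`, with first-difference index `< β`. -/
def etaSet (β m : ℕ) : Finset (Option (ℕ × Sym2 (List Bool))) :=
  insert none (((Finset.range β) ×ˢ (allVecs m ×ˢ allVecs m)).image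
    fun q => some (q.1, s(q.2.1, q.2.2)))

lemma card_etaSet_le (β m : ℕ) : (etaSet β m).card ≤ 1 + β * (2^m * 2^m) := by
  refine (Finset.card_insert_le _ _).trans ?_
  have := Finset.card_image_le (s := (Finset.range β) ×ˢ (allVecs m ×ˢ allVecs m))
    (f := fun q : ℕ × (List Bool × List Bool) => some (q.1, s(q.2.1, q.2.2)))
  simp only [Finset.card_product, Finset.card_range] at this ⊢
  rw [card_allVecs] at this
  omega

lemma eta_mem {β r' : ℕ} (hr : 0 < r') {a b : List Bool}
    (ha : a.length = β * r') (hb : b.length = β * r') :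
    eta r' a b ∈ etaSet β r' := by
  unfold eta
  set L := ((blocksOf r' a).zip (blocksOf r' b)) with hL
  cases hfind : (L.zipIdx.map Prod.swap).find? (fun q => q.2.1 != q.2.2) with
  | none => simp [etaSet]
  | some q =>
    obtain ⟨i, c1, c2⟩ := q
    have hmem : (i, (c1, c2)) ∈ L.zipIdx.map Prod.swap := List.mem_of_find?_eq_some hfind
    have hget : L[i]? = some (c1, c2) := by
      obtain ⟨⟨x, j⟩, hx, heq⟩ := List.mem_map.1 hmem
      simp only [Prod.swap, Prod.mk.injEq] at heq
      obtain ⟨rfl, rfl⟩ := heq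
      exact List.mk_mem_zipIdx_iff_getElem?.1 hx
    have hilt : i < L.length := by
      by_contra hcon
      rw [List.getElem?_eq_none (by omega)] at hget
      simp at hget
    have hmemL : (c1, c2) ∈ L := by
      rw [List.getElem?_eq_some_iff] at hget
      obtain ⟨h, heq⟩ := hget
      rw [← heq]
      exact List.getElem_mem _
    have hc1 : c1 ∈ a.toChunks r' ∧ c2 ∈ b.toChunks r' := List.of_mem_zip hmemL
    obtain ⟨hLa, hall_a⟩ := toChunks_full r' hr β a ha
    obtain ⟨hLb, hall_b⟩ := toChunks_full r' hr β b hb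
    have hiβ : i < β := by
      have : L.length = β := by
        rw [hL]; unfold blocksOf; rw [List.length_zip, hLa, hLb]; simp
      omega
    simp only [Option.map_some]
    refine Finset.mem_insert_of_mem (Finset.mem_image.2 ⟨(i, (c1, c2)), ?_, rfl⟩)
    refine Finset.mem_product.2 ⟨Finset.mem_range.2 hiβ, Finset.mem_product.2
      ⟨mem_allVecs.2 (hall_a _ hc1.1), mem_allVecs.2 (hall_b _ hc1.2)⟩⟩

lemma xi_mem {β d m : ℕ} (hβ : 0 < β) {v w : List Bool}
    (hv : v.length = m * β^(d+1)) (hw : w.length = m * β^(d+1)) :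
    xi (fun i => β ^ i) d v w ∈ listsOf (etaSet β (β^d)) m := by
  have hpos : 0 < β^(d+1) := Nat.pow_pos hβ
  have hposd : 0 < β^d := Nat.pow_pos hβ
  obtain ⟨hLa, hall_a⟩ := toChunks_full (β^(d+1)) hpos m v hv
  obtain ⟨hLb, hall_b⟩ := toChunks_full (β^(d+1)) hpos m w hw
  unfold xi
  refine map_mem_listsOf ?_ ?_
  · unfold blocksOf; rw [List.length_zip, hLa, hLb]; simp
  · rintro ⟨a, b⟩ hab
    have := List.of_mem_zip hab
    have ha : a.length = β * β^d := by
      rw [hall_a a this.1, pow_succ, Nat.mul_comm]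
    have hb : b.length = β * β^d := by
      rw [hall_b b this.2, pow_succ, Nat.mul_comm]
    exact eta_mem hposd ha hb

lemma geom_le {β : ℕ} (hβ : 2 ≤ β) (p : ℕ) :
    ∑ j ∈ Finset.range (p+1), β^j ≤ 2 * β^p := by
  induction p with
  | zero => simp
  | succ p ih =>
    rw [Finset.sum_range_succ]
    have h1 : 2 * β^p ≤ β^(p+1) := by
      rw [pow_succ]
      calc 2 * β^p = β^p * 2 := by ring
        _ ≤ β^p * β := Nat.mul_le_mul_left _ hβ
    omega

lemma natBound {p β : ℕ} (hβ : 2 ≤ β) :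
    (colorsOn (fun i => β ^ i) p (allVecs (β ^ (p + 1)))).card ≤
      β^(4*β^p) * 2^(2*(p+1)*β^p) := by
  have hβ0 : 0 < β := by omega
  set F : ℕ → Finset (List (Option (ℕ × Sym2 (List Bool)))) :=
    fun j => listsOf (etaSet β (β^(p-j))) (β^j) with hF
  have hsub : colorsOn (fun i => β ^ i) p (allVecs (β ^ (p + 1))) ⊆ prodLists F (p+1) := by
    intro c hc
    obtain ⟨q, hq, rfl⟩ := Finset.mem_image.1 hc
    obtain ⟨hq1, -⟩ := Finset.mem_filter.1 hq
    obtain ⟨hv, hw⟩ := Finset.mem_product.1 hq1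
    have hvl : q.1.length = β ^ (p+1) := mem_allVecs.1 hv
    have hwl : q.2.length = β ^ (p+1) := mem_allVecs.1 hw
    unfold cColor
    refine range_map_mem_prodLists (p+1) F _ ?_
    intro j hj
    have hjp : j ≤ p := by omega
    have hsplit : β ^ (p+1) = β^j * β^(p-j+1) := by
      rw [← pow_add]
      congr 1
      omega
    exact xi_mem hβ0 (by rw [hvl, hsplit]) (by rw [hwl, hsplit])
  refine (Finset.card_le_card hsub).trans ?_
  rw [card_prodLists]
  have key : ∀ j ∈ Finset.range (p+1), (F j).card ≤ β^(2*β^j) * 2^(2*β^p) := by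
    intro j hj
    have hjp : j ≤ p := by have := Finset.mem_range.1 hj; omega
    rw [hF, card_listsOf]
    have h1 : (etaSet β (β^(p-j))).card ≤ β^2 * 2^(2*β^(p-j)) := by
      refine (card_etaSet_le β (β^(p-j))).trans ?_
      set X := 2^(β^(p-j)) * 2^(β^(p-j)) with hX
      have hx : 0 < X := by positivity
      have : 2^(2*β^(p-j)) = X := by rw [hX, two_mul, pow_add]
      rw [this]
      calc 1 + β * X ≤ β*X + β*X := by
            have h1 : 1 ≤ β * X := Nat.one_le_iff_ne_zero.2 (by positivity)
            omega
        _ = 2*(β*X) := by ring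
        _ ≤ β*(β*X) := Nat.mul_le_mul_right _ hβ
        _ = β^2 * X := by ring
    calc (etaSet β (β^(p-j))).card ^ β^j ≤ (β^2 * 2^(2*β^(p-j)))^(β^j) :=
          Nat.pow_le_pow_left h1 _
      _ = β^(2*β^j) * 2^(2*(β^(p-j)*β^j)) := by
          rw [mul_pow, ← pow_mul, ← pow_mul]
          ring_nf
      _ = β^(2*β^j) * 2^(2*β^p) := by
          have hpj : β^(p-j)*β^j = β^p := by
            rw [← pow_add]
            congr 1
            omega
          rw [hpj]
  refine (Finset.prod_le_prod (fun j _ => Nat.zero_le _) key).trans ?_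
  rw [Finset.prod_mul_distrib, Finset.prod_pow_eq_pow_sum, Finset.prod_const,
    Finset.card_range, ← pow_mul]
  have hsum : ∑ j ∈ Finset.range (p+1), 2*β^j ≤ 4*β^p := by
    rw [← Finset.mul_sum]
    have := geom_le hβ p
    omega
  have h2 : 2*β^p*(p+1) = 2*(p+1)*β^p := by ring
  rw [h2]
  exact Nat.mul_le_mul_right _ (Nat.pow_le_pow_right hβ0 hsum)

end EGAux


/-- **Theorem 2.2.** For `p ≥ 1`, `β ≥ 2` and `r_i = β^i`, the coloring `c_p` of the
complete graph on `{0,1}^{β^{p+1}}` (which has `n = 2^{β^{p+1}}` vertices) uses at most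
`2^{4(p+1)β^p log₂ β}` colors; equivalently, at most
`2^{4 (log₂ n)^{1 − 1/(p+1)} log₂ log₂ n}` colors. -/
theorem stmt1 (p β : ℕ) (hp : 1 ≤ p) (hβ : 2 ≤ β) :
    (allVecs (β ^ (p + 1))).card = 2 ^ β ^ (p + 1) ∧
    ((colorsOn (fun i => β ^ i) p (allVecs (β ^ (p + 1)))).card : ℝ) ≤
      (2 : ℝ) ^ (4 * ((p : ℝ) + 1) * (β : ℝ) ^ p * Real.logb 2 β) ∧
    ∀ n : ℝ, n = (2 : ℝ) ^ (β ^ (p + 1) : ℕ) →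
      ((colorsOn (fun i => β ^ i) p (allVecs (β ^ (p + 1)))).card : ℝ) ≤
        (2 : ℝ) ^ (4 * Real.logb 2 n ^ (1 - 1 / ((p : ℝ) + 1)) *
          Real.logb 2 (Real.logb 2 n)) := by
  have hβ0 : 0 < β := by omega
  have hβR : (2:ℝ) ≤ (β:ℝ) := by exact_mod_cast hβ
  set L := Real.logb 2 (β:ℝ) with hLdef
  have hL1 : 1 ≤ L := by
    rw [hLdef, show (1:ℝ) = Real.logb 2 2 by
      simp [Real.logb_self_eq_one (by norm_num : (1:ℝ) < 2)]]
    exact Real.logb_le_logb_of_le (by norm_num) (by norm_num) hβR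
  have hexp : L * ((4*β^p : ℕ) : ℝ) + ((2*(p+1)*β^p : ℕ) : ℝ) ≤
      4 * ((p : ℝ) + 1) * (β : ℝ) ^ p * L := by
    push_cast
    have hBp : (0:ℝ) ≤ (β:ℝ)^p := by positivity
    have hp1 : (1:ℝ) ≤ (p:ℝ) := by exact_mod_cast hp
    nlinarith [mul_nonneg hBp (sub_nonneg.2 hL1),
      mul_nonneg (mul_nonneg hBp (sub_nonneg.2 hL1)) (sub_nonneg.2 hp1)]
  have hmain : ((colorsOn (fun i => β ^ i) p (allVecs (β ^ (p + 1)))).card : ℝ) ≤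
      (2 : ℝ) ^ (4 * ((p : ℝ) + 1) * (β : ℝ) ^ p * L) := by
    have hnat := EGAux.natBound (p := p) hβ
    have hcast : ((colorsOn (fun i => β ^ i) p (allVecs (β ^ (p + 1)))).card : ℝ) ≤
        ((β:ℝ)^(4*β^p) * (2:ℝ)^(2*(p+1)*β^p)) := by
      have := (Nat.cast_le (α := ℝ)).2 hnat
      push_cast at this
      exact this
    refine hcast.trans ?_
    have hb2 : (β:ℝ) = (2:ℝ) ^ L := (Real.rpow_logb two_pos (by norm_num) (by positivity)).symm
    have hcast2 : ((β:ℝ)^(4*β^p) * (2:ℝ)^(2*(p+1)*β^p)) =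
        (2:ℝ) ^ (L * ((4*β^p : ℕ):ℝ) + ((2*(p+1)*β^p : ℕ):ℝ)) := by
      rw [hb2, ← Real.rpow_natCast ((2:ℝ)^L) (4*β^p), ← Real.rpow_mul (by norm_num),
        ← Real.rpow_natCast (2:ℝ) (2*(p+1)*β^p), ← Real.rpow_add (by norm_num)]
    rw [hcast2]
    exact (Real.rpow_le_rpow_left_iff (by norm_num : (1:ℝ) < 2)).2 hexp
  refine ⟨EGAux.card_allVecs _, hmain, ?_⟩
  intro n hn
  have hlog : Real.logb 2 n = ((β:ℝ))^(p+1) := by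
    rw [hn, Real.logb_pow, Real.logb_self_eq_one (by norm_num : (1:ℝ) < 2)]
    push_cast
    ring
  have hpow : Real.logb 2 n ^ (1 - 1/((p:ℝ)+1)) = (β:ℝ)^p := by
    rw [hlog, ← Real.rpow_natCast (β:ℝ) (p+1), ← Real.rpow_mul (by positivity)]
    rw [show (((p+1 : ℕ)):ℝ) * (1 - 1/((p:ℝ)+1)) = (p:ℝ) by
      have hpne : ((p:ℝ)+1) ≠ 0 := by positivity
      push_cast
      field_simp
      ring]
    exact Real.rpow_natCast _ p
  have hloglog : Real.logb 2 (Real.logb 2 n) = ((p:ℝ)+1) * L := by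
    rw [hlog, hLdef]
    rw [show ((β:ℝ))^(p+1) = ((β:ℝ))^((p+1 : ℕ)) by norm_num, Real.logb_pow]
    push_cast
    ring
  rw [hpow, hloglog]
  rw [show 4 * (β:ℝ)^p * (((p:ℝ)+1) * L) = 4 * ((p:ℝ)+1) * (β:ℝ)^p * L by ring]
  exact hmain
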